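/- arXiv:1703.02356 — 3 statements merged into one kernel-verified Lean document; each statement's English description precedes it below -/
import Mathlib

section
/- Let K = F_{q^m} ⊇ F = F_q with m prime not dividing q - 1. Then the number of orbits of the action on K \ F generated by the Frobenius σ(a) = a^q together with scalar multiplication by F^× equals (q^m - q)/(m(q - 1)); equivalently, every orbit {k·σ^i(a) : 0 ≤ i ≤ m-1, k ∈ F^×} has exactly m(q-1) elements. -/
set_option linter.unusedSectionVars false

open Polynomial

section Aux

variable {q m : ℕ} {F K : Type} [Field F] [Field K] [Fintype F] [Fintype K] [Algebra F K]

private lemma aux_phi_pow (hF : Fintype.card F = q) (e : F) (i : ℕ) :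
    (algebraMap F K e) ^ q ^ i = algebraMap F K e := by
  rw [← map_pow]
  congr 1
  have := FiniteField.pow_card_pow i e
  rwa [hF] at this

private lemma aux_pow_mod (hK : Fintype.card K = q ^ m) (x : K) (i : ℕ) :
    x ^ q ^ i = x ^ q ^ (i % m) := by
  conv_lhs => rw [← Nat.div_add_mod i m, pow_add, pow_mul q m, pow_mul x, ← hK,
    FiniteField.pow_card_pow]

private lemma aux_pow_inj (hK : Fintype.card K = q ^ m) {i : ℕ} (him : i ≤ m) {x y : K}
    (h : x ^ q ^ i = y ^ q ^ i) : x = y := by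
  have hx : ∀ z : K, (z ^ q ^ i) ^ q ^ (m - i) = z := by
    intro z
    rw [← pow_mul, ← pow_add, Nat.add_sub_cancel' him, ← hK, FiniteField.pow_card]
  rw [← hx x, h, hx y]

private lemma aux_mem_range_iff (hq2 : 2 ≤ q) (hF : Fintype.card F = q) {x : K} :
    x ∈ Set.range (algebraMap F K) ↔ x ^ q = x := by
  classical
  constructor
  · rintro ⟨e, rfl⟩
    rw [← map_pow]
    congr 1
    have := FiniteField.pow_card e
    rwa [hF] at this
  · intro hx
    have hpne : (X ^ q - X : K[X]) ≠ 0 := FiniteField.X_pow_card_sub_X_ne_zero K hq2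
    have hdeg : (X ^ q - X : K[X]).natDegree = q := FiniteField.X_pow_card_sub_X_natDegree_eq K hq2
    have hsub : (Set.range (algebraMap F K)).toFinset ⊆ (X ^ q - X : K[X]).roots.toFinset := by
      intro y hy
      rw [Set.mem_toFinset] at hy
      obtain ⟨e, rfl⟩ := hy
      rw [Multiset.mem_toFinset, mem_roots hpne]
      have : (algebraMap F K e) ^ q = algebraMap F K e := by
        have := aux_phi_pow (K := K) hF e 1
        rwa [pow_one] at this
      simp [IsRoot, this]
    have hcard1 : (Set.range (algebraMap F K)).toFinset.card = q := by
      rw [Set.toFinset_range, Finset.card_image_of_injective _ (algebraMap F K).injective,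
        Finset.card_univ, hF]
    have hcard2 : (X ^ q - X : K[X]).roots.toFinset.card ≤ q :=
      le_trans (Multiset.toFinset_card_le _) (le_trans (Polynomial.card_roots' _) hdeg.le)
    have heq : (Set.range (algebraMap F K)).toFinset = (X ^ q - X : K[X]).roots.toFinset :=
      Finset.eq_of_subset_of_card_le hsub (hcard2.trans hcard1.ge)
    have hxr : x ∈ (X ^ q - X : K[X]).roots.toFinset := by
      rw [Multiset.mem_toFinset, mem_roots hpne]
      simp [IsRoot, hx]
    rw [← heq, Set.mem_toFinset] at hxr
    exact hxr

private lemma aux_iter (hF : Fintype.card F = q) {a : K} {e : F} {d : ℕ}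
    (h : a ^ q ^ d = algebraMap F K e * a) (n : ℕ) :
    a ^ q ^ (d * n) = algebraMap F K (e ^ n) * a := by
  induction n with
  | zero => simp
  | succ n ih =>
    have h1 : a ^ q ^ (d * (n + 1)) = (a ^ q ^ (d * n)) ^ q ^ d := by
      rw [← pow_mul, ← pow_add, Nat.mul_succ]
    rw [h1, ih, mul_pow, aux_phi_pow hF, h, ← mul_assoc, ← map_mul, ← pow_succ]

private lemma aux_no_eigen (hq2 : 2 ≤ q) (hm : m.Prime) (hdvd : ¬ m ∣ (q - 1))
    (hF : Fintype.card F = q) (hK : Fintype.card K = q ^ m) {a : K}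
    (ha : a ∉ Set.range (algebraMap F K)) {e : F} {d : ℕ} (hd0 : 0 < d) (hdm : d < m)
    (he : a ^ q ^ d = algebraMap F K e * a) (he0 : e ≠ 0) : False := by
  have ha0 : a ≠ 0 := fun h => ha ⟨0, by simp [h]⟩
  have hcop : Nat.Coprime d m := Nat.coprime_comm.mp
    ((Nat.Prime.coprime_iff_not_dvd hm).mpr (fun h => absurd (Nat.le_of_dvd hd0 h) (not_le.mpr hdm)))
  obtain ⟨n, -, hn⟩ := Nat.exists_mul_mod_eq_one_of_coprime hcop hm.one_lt
  have h1 : a ^ q = algebraMap F K (e ^ n) * a := by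
    have h2 := aux_iter hF he n
    rwa [aux_pow_mod hK, hn, pow_one] at h2
  set f := e ^ n with hf
  have h1' : a ^ q ^ 1 = algebraMap F K f * a := by rwa [pow_one]
  have h2 : ∀ t, a ^ q ^ t = algebraMap F K (f ^ t) * a := by
    intro t
    have h3 := aux_iter hF h1' t
    rwa [one_mul] at h3
  have h3 : algebraMap F K (f ^ m) * a = a := by
    rw [← h2 m, ← hK, FiniteField.pow_card]
  have h4 : algebraMap F K (f ^ m) = 1 := by
    have := h3.trans (one_mul a).symm
    exact mul_right_cancel₀ ha0 this
  have hfm : f ^ m = 1 := (algebraMap F K).injective (by rw [map_one, h4])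
  have hf0 : f ≠ 0 := pow_ne_zero n he0
  have hfq : f ^ (q - 1) = 1 := by
    have := FiniteField.pow_card_sub_one_eq_one f hf0
    rwa [hF] at this
  have hcop2 : Nat.Coprime m (q - 1) := (Nat.Prime.coprime_iff_not_dvd hm).mpr hdvd
  have hord : orderOf f ∣ 1 := by
    have := Nat.dvd_gcd (orderOf_dvd_of_pow_eq_one hfm) (orderOf_dvd_of_pow_eq_one hfq)
    rwa [Nat.Coprime.gcd_eq_one hcop2] at this
  have hf1 : f = 1 := orderOf_eq_one_iff.mp (Nat.dvd_one.mp hord)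
  rw [hf1, map_one, one_mul] at h1
  exact ha ((aux_mem_range_iff hq2 hF).mpr h1)

private lemma aux_orbit_inj_le (hq2 : 2 ≤ q) (hm : m.Prime) (hdvd : ¬ m ∣ (q - 1))
    (hF : Fintype.card F = q) (hK : Fintype.card K = q ^ m) {a : K}
    (ha : a ∉ Set.range (algebraMap F K)) {k k' : Fˣ} {i j : ℕ} (hij : i ≤ j)
    (hi : i < m) (hj : j < m)
    (h : algebraMap F K (k : F) * a ^ q ^ i = algebraMap F K (k' : F) * a ^ q ^ j) :
    k = k' ∧ i = j := by
  have ha0 : a ≠ 0 := fun h => ha ⟨0, by simp [h]⟩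
  rcases eq_or_lt_of_le hij with rfl | hlt
  · have hpow : (a : K) ^ q ^ i ≠ 0 := pow_ne_zero _ ha0
    have := mul_right_cancel₀ hpow h
    exact ⟨Units.ext ((algebraMap F K).injective this), rfl⟩
  · exfalso
    set e : F := ((k'⁻¹ * k : Fˣ) : F) with hedef
    have he0 : e ≠ 0 := Units.ne_zero _
    have h1 : a ^ q ^ j = algebraMap F K e * a ^ q ^ i := by
      have : algebraMap F K ((k'⁻¹ : Fˣ) : F) * (algebraMap F K (k : F) * a ^ q ^ i)
          = algebraMap F K ((k'⁻¹ : Fˣ) : F) * (algebraMap F K (k' : F) * a ^ q ^ j) := by rw [h]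
      rw [← mul_assoc, ← mul_assoc, ← map_mul, ← map_mul, ← Units.val_mul, ← Units.val_mul,
        inv_mul_cancel, Units.val_one, map_one, one_mul] at this
      exact this.symm
    -- raise to q ^ (m - i)
    have h2 : a ^ q ^ (j - i) = algebraMap F K e * a := by
      have h3 := congrArg (· ^ q ^ (m - i)) h1
      simp only [mul_pow, ← pow_mul, ← pow_add] at h3
      rw [aux_phi_pow hF] at h3
      have hi' : i + (m - i) = m := by omega
      have hj' : j + (m - i) = (j - i) + m := by omega
      rw [hi', hj', pow_add q (j - i) m, pow_mul a, ← hK, FiniteField.pow_card,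
        FiniteField.pow_card] at h3
      exact h3
    exact aux_no_eigen hq2 hm hdvd hF hK ha (by omega) (by omega) h2 he0

private lemma aux_orbit_not_mem (hF : Fintype.card F = q) (hK : Fintype.card K = q ^ m)
    {a : K} (ha : a ∉ Set.range (algebraMap F K)) (k : Fˣ) {i : ℕ} (him : i ≤ m) :
    algebraMap F K (k : F) * a ^ q ^ i ∉ Set.range (algebraMap F K) := by
  rintro ⟨c, hc⟩
  apply ha
  have h1 : algebraMap F K (((k⁻¹ : Fˣ) : F) * c) = a ^ q ^ i := by
    rw [map_mul, hc, ← mul_assoc, ← map_mul, ← Units.val_mul, inv_mul_cancel, Units.val_one,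
      map_one, one_mul]
  have h2 : (algebraMap F K (((k⁻¹ : Fˣ) : F) * c)) ^ q ^ i = a ^ q ^ i := by
    rw [aux_phi_pow hF, h1]
  exact ⟨_, aux_pow_inj hK him h2⟩

end Aux

/-- For K = F_{q^m} ⊇ F = F_q with m prime, m ∤ (q-1): the relation
a ~ b iff b = k·σ^i(a) (k ∈ F^×, 0 ≤ i < m, σ the Frobenius x ↦ x^q) on
K \ F has exactly (q^m - q)/(m(q-1)) classes; equivalently each orbit has
exactly m(q-1) elements. -/
theorem stmt_8 (q m : ℕ) (hq : IsPrimePow q) (hm : m.Prime)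
    (hdvd : ¬ m ∣ (q - 1))
    (F K : Type) [Field F] [Field K] [Fintype F] [Fintype K] [Algebra F K]
    (hF : Fintype.card F = q) (hK : Fintype.card K = q ^ m) :
    Nat.card (Quot (fun (a b : {x : K // x ∉ Set.range (algebraMap F K)}) =>
        ∃ (k : Fˣ) (i : ℕ), i < m ∧
          (b : K) = algebraMap F K (k : F) * (a : K) ^ (q ^ i))) =
      (q ^ m - q) / (m * (q - 1)) ∧
    ∀ a : {x : K // x ∉ Set.range (algebraMap F K)},
      Nat.card {b : {x : K // x ∉ Set.range (algebraMap F K)} //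
          ∃ (k : Fˣ) (i : ℕ), i < m ∧
            (b : K) = algebraMap F K (k : F) * (a : K) ^ (q ^ i)} =
        m * (q - 1) := by
  classical
  have hq2 : 2 ≤ q := hq.two_le
  have hm2 : 2 ≤ m := hm.two_le
  set S := {x : K // x ∉ Set.range (algebraMap F K)} with hSdef
  set r : S → S → Prop := fun a b =>
    ∃ (k : Fˣ) (i : ℕ), i < m ∧
      (b : K) = algebraMap F K (k : F) * (a : K) ^ (q ^ i) with hrdef
  -- orbit cardinality
  have horb : ∀ a : S, Nat.card {b : S // r a b} = m * (q - 1) := by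
    intro a
    let f : Fˣ × Fin m → {b : S // r a b} := fun p =>
      ⟨⟨algebraMap F K (p.1 : F) * (a : K) ^ q ^ (p.2 : ℕ),
        aux_orbit_not_mem hF hK a.2 p.1 p.2.2.le⟩, p.1, p.2, p.2.2, rfl⟩
    have hbij : Function.Bijective f := by
      constructor
      · rintro ⟨k, i⟩ ⟨k', j⟩ h
        have h' : algebraMap F K (k : F) * (a : K) ^ q ^ (i : ℕ)
            = algebraMap F K (k' : F) * (a : K) ^ q ^ (j : ℕ) :=
          congrArg (fun x => ((x : {b : S // r a b}) : S) : _ → K) h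
        rcases le_or_gt (i : ℕ) (j : ℕ) with hij | hij
        · obtain ⟨hk, hi⟩ := aux_orbit_inj_le hq2 hm hdvd hF hK a.2 hij i.2 j.2 h'
          exact Prod.ext hk (Fin.ext hi)
        · obtain ⟨hk, hi⟩ := aux_orbit_inj_le hq2 hm hdvd hF hK a.2 hij.le j.2 i.2 h'.symm
          exact Prod.ext hk.symm (Fin.ext hi.symm)
      · rintro ⟨⟨b, hb⟩, k, i, him, heq⟩
        exact ⟨(k, ⟨i, him⟩), Subtype.ext (Subtype.ext heq.symm)⟩
    calc Nat.card {b : S // r a b} = Nat.card (Fˣ × Fin m) :=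
          (Nat.card_congr (Equiv.ofBijective f hbij)).symm
      _ = (q - 1) * m := by
          rw [Nat.card_prod, Nat.card_eq_fintype_card, Nat.card_eq_fintype_card,
            Fintype.card_units, hF, Fintype.card_fin]
      _ = m * (q - 1) := mul_comm _ _
  -- total cardinality
  have hScard : Nat.card S = q ^ m - q := by
    rw [hSdef, Nat.card_eq_fintype_card, Fintype.card_subtype_compl, hK]
    congr 1
    have h1 : Fintype.card {x : K // x ∈ Set.range (algebraMap F K)}
        = Fintype.card (Set.range (algebraMap F K)) := rfl
    rw [h1, Set.card_range_of_injective (algebraMap F K).injective, hF]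
  -- equivalence
  have hequiv : Equivalence r := by
    constructor
    · intro a
      exact ⟨1, 0, hm.pos, by simp⟩
    · rintro a b ⟨k, i, him, hab⟩
      rcases Nat.eq_zero_or_pos i with rfl | hi0
      · refine ⟨k⁻¹, 0, hm.pos, ?_⟩
        rw [hab]
        simp only [pow_zero, pow_one]
        rw [← mul_assoc, ← map_mul, ← Units.val_mul,
          inv_mul_cancel, Units.val_one, map_one, one_mul]
      · refine ⟨k⁻¹, m - i, by omega, ?_⟩
        rw [hab, mul_pow, aux_phi_pow hF, ← pow_mul, ← pow_add, Nat.add_sub_cancel' him.le,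
          ← hK, FiniteField.pow_card, ← mul_assoc, ← map_mul, ← Units.val_mul,
          inv_mul_cancel, Units.val_one, map_one, one_mul]
    · rintro a b c ⟨k, i, him, hab⟩ ⟨l, j, hjm, hbc⟩
      refine ⟨l * k, (i + j) % m, Nat.mod_lt _ hm.pos, ?_⟩
      rw [hbc, hab, mul_pow, aux_phi_pow hF, ← pow_mul, ← pow_add, ← aux_pow_mod hK,
        ← mul_assoc, ← map_mul, ← Units.val_mul]
  -- counting the quotient
  have hfin : Finite (Quot r) := Finite.of_surjective (Quot.mk r) (Quot.mk_surjective)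
  have finS : Fintype S := Fintype.ofFinite _
  have finQ : Fintype (Quot r) := Fintype.ofFinite _
  have hfib : ∀ c : Quot r, Nat.card {x : S // Quot.mk r x = c} = m * (q - 1) := by
    intro c
    obtain ⟨a, rfl⟩ := Quot.exists_rep c
    have he : ∀ x : S, (Quot.mk r x = Quot.mk r a) ↔ r a x := by
      intro x
      constructor
      · intro h
        exact hequiv.symm (hequiv.eqvGen_iff.mp (Quot.eqvGen_exact h))
      · intro h
        exact Quot.eqvGen_sound (hequiv.eqvGen_iff.mpr (hequiv.symm h))
    rw [Nat.card_congr (Equiv.subtypeEquivRight he)]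
    exact horb a
  have hkey : Nat.card S = Nat.card (Quot r) * (m * (q - 1)) := by
    calc Nat.card S = Nat.card (Σ c : Quot r, {x : S // Quot.mk r x = c}) :=
          (Nat.card_congr (Equiv.sigmaFiberEquiv (Quot.mk r))).symm
      _ = ∑ c : Quot r, Nat.card {x : S // Quot.mk r x = c} := by
          rw [Nat.card_eq_fintype_card, Fintype.card_sigma]
          exact Finset.sum_congr rfl fun c _ => (Nat.card_eq_fintype_card).symm
      _ = ∑ _c : Quot r, (m * (q - 1)) := Finset.sum_congr rfl fun c _ => hfib c
      _ = Nat.card (Quot r) * (m * (q - 1)) := by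
          rw [Finset.sum_const, Finset.card_univ, smul_eq_mul, Nat.card_eq_fintype_card]
  have hpos : 0 < m * (q - 1) := Nat.mul_pos hm.pos (by omega)
  refine ⟨?_, horb⟩
  rw [hScard] at hkey
  exact (Nat.div_eq_of_eq_mul_left hpos hkey).symm
end

section
/- Let K = F_{q^m} ⊇ F = F_q with m prime dividing q - 1. Then the equivalence relation on K \ F given by a ~ b iff b = k·σ^i(a) for some k ∈ F^×, 0 ≤ i ≤ m-1 (σ the q-power Frobenius) has exactly (m - 1) + (q^m - q - (q-1)(m-1))/(m(q-1)) equivalence classes. -/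
open Polynomial Finset

namespace Stmt9Aux

variable {q m : ℕ} {F K : Type} [Field F] [Field K] [Fintype F] [Fintype K] [Algebra F K]

lemma mem_range_iff (hq2 : 2 ≤ q) (hF : Fintype.card F = q) (x : K) :
    x ∈ Set.range (algebraMap F K) ↔ x ^ q = x := by
  classical
  constructor
  · rintro ⟨y, rfl⟩
    rw [← map_pow]
    congr 1
    conv_rhs => rw [← FiniteField.pow_card y, hF]
  · intro hx
    set T := Finset.univ.filter (fun z : K => z ^ q = z) with hT
    set R' := Finset.univ.image (algebraMap F K) with hR'
    have hsub : R' ⊆ T := by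
      intro z hz
      simp only [hR', Finset.mem_image] at hz
      obtain ⟨y, _, rfl⟩ := hz
      simp only [hT, Finset.mem_filter, Finset.mem_univ, true_and]
      rw [← map_pow]
      congr 1
      conv_rhs => rw [← FiniteField.pow_card y, hF]
    have hne : (X ^ q - X : K[X]) ≠ 0 := FiniteField.X_pow_card_sub_X_ne_zero K hq2
    have hTcard : T.card ≤ q := by
      have hTsub : T ⊆ (X ^ q - X : K[X]).roots.toFinset := by
        intro z hz
        simp only [hT, Finset.mem_filter, Finset.mem_univ, true_and] at hz
        simp only [Multiset.mem_toFinset, mem_roots hne, IsRoot.def, eval_sub, eval_pow, eval_X]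
        exact sub_eq_zero.mpr hz
      calc T.card ≤ (X ^ q - X : K[X]).roots.toFinset.card := Finset.card_le_card hTsub
        _ ≤ Multiset.card (X ^ q - X : K[X]).roots := Multiset.toFinset_card_le _
        _ ≤ (X ^ q - X : K[X]).natDegree := Polynomial.card_roots' _
        _ = q := FiniteField.X_pow_card_sub_X_natDegree_eq K hq2
    have hR'card : R'.card = q := by
      rw [hR', Finset.card_image_of_injective _ (algebraMap F K).injective,
        Finset.card_univ, hF]
    have hEq : R' = T := Finset.eq_of_subset_of_card_le hsub (by omega)
    have hx' : x ∈ T := by simp [hT, hx]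
    rw [← hEq] at hx'
    simp only [hR', Finset.mem_image, Finset.mem_univ, true_and] at hx'
    obtain ⟨y, hy⟩ := hx'
    exact ⟨y, hy⟩

lemma pow_qm (hK : Fintype.card K = q ^ m) (x : K) : x ^ q ^ m = x := by
  rw [← hK]; exact FiniteField.pow_card x

lemma range_pow_fix (hq2 : 2 ≤ q) (hF : Fintype.card F = q) {x : K}
    (hx : x ∈ Set.range (algebraMap F K)) (i : ℕ) : x ^ q ^ i = x := by
  induction i with
  | zero => simp
  | succ n ih => rw [pow_succ, pow_mul, ih, (mem_range_iff hq2 hF x).mp hx]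

lemma pow_q_add_mul (hK : Fintype.card K = q ^ m) (x : K) (s t : ℕ) :
    x ^ q ^ (s + m * t) = x ^ q ^ s := by
  induction t with
  | zero => simp
  | succ n ih =>
    have h : s + m * (n + 1) = (s + m * n) + m := by ring
    rw [h, pow_add, pow_mul, pow_qm hK, ih]

lemma frob_inj (hK : Fintype.card K = q ^ m) {i : ℕ} (him : i ≤ m) {x y : K}
    (h : x ^ q ^ i = y ^ q ^ i) : x = y := by
  have hx : (x ^ q ^ i) ^ q ^ (m - i) = x := by
    rw [← pow_mul, ← pow_add, Nat.add_sub_cancel' him, pow_qm hK]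
  have hy : (y ^ q ^ i) ^ q ^ (m - i) = y := by
    rw [← pow_mul, ← pow_add, Nat.add_sub_cancel' him, pow_qm hK]
  rw [← hx, ← hy, h]

omit [Fintype F] [Fintype K] in
lemma pow_mem_range {x : K} (hx : x ∈ Set.range (algebraMap F K)) (n : ℕ) :
    x ^ n ∈ Set.range (algebraMap F K) := by
  obtain ⟨y, rfl⟩ := hx; exact ⟨y ^ n, map_pow _ _ _⟩

lemma notin_range_mul_pow (hK : Fintype.card K = q ^ m)
    {a : K} (ha : a ∉ Set.range (algebraMap F K)) (k : Fˣ) {i : ℕ} (him : i ≤ m) :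
    algebraMap F K (k : F) * a ^ q ^ i ∉ Set.range (algebraMap F K) := by
  intro h
  have h1 : a ^ q ^ i ∈ Set.range (algebraMap F K) := by
    obtain ⟨y, hy⟩ := h
    refine ⟨(k⁻¹ : Fˣ) * y, ?_⟩
    rw [map_mul, hy, ← mul_assoc, ← map_mul]
    norm_num
  have h2 : a ∈ Set.range (algebraMap F K) := by
    have h3 : (a ^ q ^ i) ^ q ^ (m - i) = a := by
      rw [← pow_mul, ← pow_add, Nat.add_sub_cancel' him, pow_qm hK]
    rw [← h3]
    exact pow_mem_range h1 _
  exact ha h2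

lemma special_step (hq2 : 2 ≤ q) (hF : Fintype.card F = q) {a c : K} {d : ℕ}
    (hc : c ∈ Set.range (algebraMap F K)) (h : a ^ q ^ d = c * a) (t : ℕ) :
    a ^ q ^ (t * d) = c ^ t * a := by
  induction t with
  | zero => simp
  | succ n ih =>
    have he : (n + 1) * d = n * d + d := by ring
    rw [he, pow_add, mul_comm (q ^ (n * d)), pow_mul, ← pow_mul, mul_comm (q ^ d), pow_mul,
      ih, mul_pow, range_pow_fix hq2 hF (pow_mem_range hc n) d, h]
    ring

lemma special_of_d (hq2 : 2 ≤ q) (hF : Fintype.card F = q) (hK : Fintype.card K = q ^ m)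
    (hm : m.Prime) {a : K} {d : ℕ} (hd0 : 0 < d) (hdm : d < m) {c : K}
    (hc : c ∈ Set.range (algebraMap F K)) (h : a ^ q ^ d = c * a) :
    ∃ c' : F, a ^ q = algebraMap F K c' * a := by
  have hcop : Nat.Coprime d m := by
    have hnd : ¬ m ∣ d := fun hdvd => absurd (Nat.le_of_dvd hd0 hdvd) (by omega)
    exact (Nat.coprime_comm.mp (hm.coprime_iff_not_dvd.mpr hnd))
  obtain ⟨t, -, ht⟩ := Nat.exists_mul_mod_eq_one_of_coprime hcop hm.one_lt
  have hdt : d * t = 1 + m * (d * t / m) := by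
    have := Nat.div_add_mod (d * t) m
    omega
  obtain ⟨c0, rfl⟩ := hc
  refine ⟨c0 ^ t, ?_⟩
  have h1 : a ^ q ^ (t * d) = (algebraMap F K c0) ^ t * a := special_step hq2 hF ⟨c0, rfl⟩ h t
  rw [mul_comm t d, hdt, pow_q_add_mul hK, pow_one] at h1
  rw [h1, map_pow]

lemma sum_pow_modEq (M : ℕ) (h : q ≡ 1 [MOD M]) (n : ℕ) :
    (∑ i ∈ Finset.range n, q ^ i) ≡ n [MOD M] := by
  induction n with
  | zero => simp [Nat.ModEq.refl]
  | succ n ih =>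
    rw [Finset.sum_range_succ]
    have : q ^ n ≡ 1 [MOD M] := by simpa using h.pow n
    exact ih.add this

lemma geom_nat (hq1 : 1 ≤ q) (n : ℕ) : (q - 1) * (∑ i ∈ Finset.range n, q ^ i) = q ^ n - 1 := by
  have h1 : (1:ℕ) ≤ q ^ n := Nat.one_le_pow _ _ (by omega)
  have := geom_sum_mul (q : ℤ) n
  have hcast : ((q - 1 : ℕ) : ℤ) = (q : ℤ) - 1 := by
    push_cast [hq1]; ring
  have hcast2 : ((q ^ n - 1 : ℕ) : ℤ) = (q : ℤ) ^ n - 1 := by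
    push_cast [h1]; ring
  have : ((q - 1) * (∑ i ∈ Finset.range n, q ^ i) : ℕ) = ((q ^ n - 1 : ℕ) : ℤ) := by
    push_cast [hcast, hcast2]
    rw [mul_comm]
    exact_mod_cast geom_sum_mul (q : ℤ) n
  exact_mod_cast this

end Stmt9Aux

/-- For K = F_{q^m} ⊇ F = F_q with m prime, m ∣ (q-1): the relation
a ~ b iff b = k·σ^i(a) (k ∈ F^×, 0 ≤ i < m) on K \ F has exactly
(m-1) + (q^m - q - (q-1)(m-1))/(m(q-1)) equivalence classes. -/
theorem stmt_9 (q m : ℕ) (hq : IsPrimePow q) (hm : m.Prime)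
    (hdvd : m ∣ (q - 1))
    (F K : Type) [Field F] [Field K] [Fintype F] [Fintype K] [Algebra F K]
    (hF : Fintype.card F = q) (hK : Fintype.card K = q ^ m) :
    Nat.card (Quot (fun (a b : {x : K // x ∉ Set.range (algebraMap F K)}) =>
        ∃ (k : Fˣ) (i : ℕ), i < m ∧
          (b : K) = algebraMap F K (k : F) * (a : K) ^ (q ^ i))) =
      (m - 1) + (q ^ m - q - (q - 1) * (m - 1)) / (m * (q - 1)) := by

  classical
  have hq2 : 2 ≤ q := hq.two_le
  have hm2 : 2 ≤ m := hm.two_le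
  have hmq : m ≤ q - 1 := Nat.le_of_dvd (by omega) hdvd
  have hq1 : 1 ≤ q := by omega
  have hD0 : 0 < m * (q - 1) := Nat.mul_pos (by omega) (by omega)
  set S := {x : K // x ∉ Set.range (algebraMap F K)} with hSdef
  set r : S → S → Prop := fun a b =>
      ∃ (k : Fˣ) (i : ℕ), i < m ∧
        (b : K) = algebraMap F K (k : F) * (a : K) ^ (q ^ i) with hrdef
  have hzero_mem : (0:K) ∈ Set.range (algebraMap F K) := ⟨0, map_zero _⟩
  have hane : ∀ a : S, (a:K) ≠ 0 := fun a h => a.2 (h ▸ hzero_mem)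
  have hrefl : ∀ a : S, r a a := by
    intro a
    simp only [hrdef]
    exact ⟨1, 0, by omega, by simp⟩
  have hsymm : ∀ a b : S, r a b → r b a := by
    intro a b
    simp only [hrdef]
    rintro ⟨k, i, hi, hab⟩
    rcases Nat.eq_zero_or_pos i with hi0 | hi0
    · subst hi0
      refine ⟨k⁻¹, 0, by omega, ?_⟩
      simp only [pow_zero, pow_one] at hab ⊢
      rw [hab, ← mul_assoc, ← map_mul]
      norm_num
    · refine ⟨k⁻¹, m - i, by omega, ?_⟩
      have hb : (b:K) ^ q ^ (m - i) = algebraMap F K (k:F) * (a:K) := by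
        rw [hab, mul_pow, Stmt9Aux.range_pow_fix hq2 hF ⟨(k:F), rfl⟩ (m-i),
          ← pow_mul, ← pow_add, Nat.add_sub_cancel' (le_of_lt hi), Stmt9Aux.pow_qm hK]
      rw [hb, ← mul_assoc, ← map_mul]
      norm_num
  have htrans : ∀ a b c : S, r a b → r b c → r a c := by
    intro a b c
    simp only [hrdef]
    rintro ⟨k, i, hi, hab⟩ ⟨k', j, hj, hbc⟩
    refine ⟨k' * k, (i + j) % m, Nat.mod_lt _ (by omega), ?_⟩
    have h1 : (c:K) = algebraMap F K (k':F) *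
        (algebraMap F K (k:F) * (a:K) ^ q ^ i) ^ q ^ j := by rw [hbc, hab]
    rw [mul_pow, Stmt9Aux.range_pow_fix hq2 hF ⟨(k:F), rfl⟩ j, ← pow_mul, ← pow_add] at h1
    have h2 : (a:K) ^ q ^ (i + j) = (a:K) ^ q ^ ((i+j) % m) := by
      conv_lhs => rw [← Nat.mod_add_div (i+j) m]
      exact Stmt9Aux.pow_q_add_mul hK _ _ _
    rw [h1, h2, ← mul_assoc, ← map_mul, Units.val_mul]
  have hequiv : Equivalence r :=
    ⟨hrefl, fun {a b} h => hsymm a b h, fun {a b c} h h' => htrans a b c h h'⟩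
  have hQeq : ∀ a b : S, Quot.mk r a = Quot.mk r b ↔ r a b :=
    fun a b => Quot.eq.trans hequiv.eqvGen_iff
  letI : Fintype (Quot r) := Fintype.ofSurjective (Quot.mk r) (fun c => Quot.exists_rep c)
  set P : S → Prop := fun a => ∃ c : F, (a:K) ^ q = algebraMap F K c * (a:K) with hPdef
  have hPinv : ∀ a b : S, r a b → P a → P b := by
    intro a b
    simp only [hrdef, hPdef]
    rintro ⟨k, i, hi, hab⟩ ⟨c, hc⟩
    refine ⟨c, ?_⟩
    have hkq : (algebraMap F K (k:F)) ^ q = algebraMap F K (k:F) :=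
      (Stmt9Aux.mem_range_iff hq2 hF _).mp ⟨_, rfl⟩
    have h1 : ((a:K) ^ q ^ i) ^ q = (algebraMap F K c) * (a:K) ^ q ^ i := by
      rw [← pow_mul, mul_comm (q^i) q, pow_mul, hc, mul_pow,
        Stmt9Aux.range_pow_fix hq2 hF ⟨c, rfl⟩ i]
    rw [hab, mul_pow, hkq, h1]
    ring
  -- injectivity auxiliary
  have hinj_aux : ∀ (a : S), ¬ P a → ∀ (k k' : Fˣ) (i j : ℕ), i ≤ j → j < m →
      algebraMap F K (k:F) * (a:K) ^ q ^ i = algebraMap F K (k':F) * (a:K) ^ q ^ j →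
      k = k' ∧ i = j := by
    intro a hnp k k' i j hij hjm h
    set d := j - i with hd
    have hj' : j = i + d := by omega
    have h2 : algebraMap F K (k:F) * (a:K) = algebraMap F K (k':F) * (a:K) ^ q ^ d := by
      apply Stmt9Aux.frob_inj hK (show i ≤ m by omega)
      rw [mul_pow, mul_pow, Stmt9Aux.range_pow_fix hq2 hF ⟨(k:F), rfl⟩ i,
        Stmt9Aux.range_pow_fix hq2 hF ⟨(k':F), rfl⟩ i, ← pow_mul, ← pow_add, add_comm d i,
        ← hj']
      exact h
    rcases Nat.eq_zero_or_pos d with hd0 | hd0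
    · rw [hd0, pow_zero, pow_one] at h2
      have hk : (algebraMap F K (k:F)) = algebraMap F K (k':F) :=
        mul_right_cancel₀ (hane a) h2
      exact ⟨Units.ext ((algebraMap F K).injective hk), by omega⟩
    · exfalso
      have h3 : (a:K) ^ q ^ d = algebraMap F K ((k'⁻¹ * k : Fˣ) : F) * (a:K) := by
        have hk' : algebraMap F K ((k'⁻¹ : Fˣ) : F) * algebraMap F K ((k' : Fˣ) : F) = 1 := by
          rw [← map_mul]; norm_num
        calc (a:K) ^ q ^ d
            = (algebraMap F K ((k'⁻¹:Fˣ):F) * algebraMap F K ((k':Fˣ):F)) * (a:K)^(q^d) := by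
              rw [hk', one_mul]
          _ = algebraMap F K ((k'⁻¹:Fˣ):F) * (algebraMap F K ((k':Fˣ):F) * (a:K)^(q^d)) := by
              ring
          _ = algebraMap F K ((k'⁻¹:Fˣ):F) * (algebraMap F K ((k):F) * (a:K)) := by rw [← h2]
          _ = algebraMap F K ((k'⁻¹ * k : Fˣ) : F) * (a:K) := by
              rw [Units.val_mul, map_mul, mul_assoc]
      have hpa := Stmt9Aux.special_of_d hq2 hF hK hm hd0 (by omega) ⟨_, rfl⟩ h3
      apply hnp
      simp only [hPdef]
      exact hpa
  have key2 : ∀ a : S, ¬ P a → (univ.filter fun b : S => r a b).card = m * (q - 1) := by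
    intro a hnp
    have he : (univ.filter fun b : S => r a b) =
        Finset.image (fun p : Fˣ × Fin m =>
          (⟨algebraMap F K (p.1 : F) * (a:K) ^ q ^ (p.2 : ℕ),
            Stmt9Aux.notin_range_mul_pow hK a.2 p.1 (le_of_lt p.2.2)⟩ : S)) univ := by
      ext b
      simp only [Finset.mem_filter, Finset.mem_univ, true_and, Finset.mem_image, hrdef]
      constructor
      · rintro ⟨k, i, hi, hb⟩
        exact ⟨(k, ⟨i, hi⟩), Subtype.ext hb.symm⟩
      · rintro ⟨⟨k, i⟩, hb⟩
        exact ⟨k, i, i.2, by rw [← hb]⟩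
    have hinj : Function.Injective (fun p : Fˣ × Fin m =>
        (⟨algebraMap F K (p.1 : F) * (a:K) ^ q ^ (p.2 : ℕ),
          Stmt9Aux.notin_range_mul_pow hK a.2 p.1 (le_of_lt p.2.2)⟩ : S)) := by
      rintro ⟨k, i⟩ ⟨k', j⟩ hkk
      have h := congrArg (Subtype.val) hkk
      simp only at h
      rcases le_total (i : ℕ) (j : ℕ) with hij | hij
      · obtain ⟨h1, h2⟩ := hinj_aux a hnp k k' i j hij j.2 h
        exact Prod.ext h1 (Fin.ext h2)
      · obtain ⟨h1, h2⟩ := hinj_aux a hnp k' k j i hij i.2 h.symm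
        exact Prod.ext h1.symm (Fin.ext h2.symm)
    rw [he, Finset.card_image_of_injective _ hinj, Finset.card_univ, Fintype.card_prod,
      Fintype.card_units, hF, Fintype.card_fin, mul_comm]
  have key1 : ∀ a : S, P a → (univ.filter fun b : S => r a b).card = q - 1 := by
    intro a hp
    simp only [hPdef] at hp
    obtain ⟨c, hc⟩ := hp
    have ha0 : (a:K) ≠ 0 := hane a
    have hc0 : c ≠ 0 := by
      intro h; subst h
      rw [map_zero, zero_mul] at hc
      exact ha0 (pow_eq_zero_iff (by omega : q ≠ 0) |>.mp hc)
    have hpow : ∀ i : ℕ, (a:K) ^ q ^ i = algebraMap F K (c ^ i) * (a:K) := by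
      intro i; induction i with
      | zero => simp
      | succ n ih =>
        have hfix : (algebraMap F K (c ^ n)) ^ q = algebraMap F K (c ^ n) :=
          (Stmt9Aux.mem_range_iff hq2 hF _).mp ⟨_, rfl⟩
        rw [pow_succ, pow_mul, ih, mul_pow, hfix, hc, pow_succ, map_mul]
        ring
    have hnotin : ∀ k : Fˣ, algebraMap F K (k:F) * (a:K) ∉ Set.range (algebraMap F K) := by
      intro k
      have h := Stmt9Aux.notin_range_mul_pow hK a.2 k (Nat.zero_le m)
      simpa using h
    have he : (univ.filter fun b : S => r a b) =
        Finset.image (fun k : Fˣ => (⟨algebraMap F K (k : F) * (a:K), hnotin k⟩ : S)) univ := by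
      ext b
      simp only [Finset.mem_filter, Finset.mem_univ, true_and, Finset.mem_image, hrdef]
      constructor
      · rintro ⟨k, i, hi, hb⟩
        refine ⟨k * Units.mk0 c hc0 ^ i, Subtype.ext ?_⟩
        simp only [Units.val_mul, Units.val_pow_eq_pow_val, Units.val_mk0]
        rw [hb, hpow i, map_mul, map_pow, ← mul_assoc]
      · rintro ⟨k, hb⟩
        refine ⟨k, 0, by omega, ?_⟩
        rw [← hb]
        simp
    have hinj : Function.Injective
        (fun k : Fˣ => (⟨algebraMap F K (k : F) * (a:K), hnotin k⟩ : S)) := by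
      intro k k' hkk
      have h := congrArg (Subtype.val) hkk
      simp only at h
      exact Units.ext ((algebraMap F K).injective (mul_right_cancel₀ ha0 h))
    rw [he, Finset.card_image_of_injective _ hinj, Finset.card_univ, Fintype.card_units, hF]
  -- cardinality of the ambient set
  have hcardS : Fintype.card S = q ^ m - q := by
    have h1 : Fintype.card {x : K // x ∈ Set.range (algebraMap F K)} = q := by
      rw [← hF]
      exact (Fintype.card_congr (Equiv.ofInjective _ (algebraMap F K).injective)).symm
    have h2 := Fintype.card_subtype_compl (fun x : K => x ∈ Set.range (algebraMap F K))
    calc Fintype.card S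
        = Fintype.card K - Fintype.card {x : K // x ∈ Set.range (algebraMap F K)} := h2
      _ = q ^ m - q := by rw [hK, h1]
  -- geometric sum and gcd facts
  have hgeom := Stmt9Aux.geom_nat (q := q) hq1 m
  have hq_mod_m : q ≡ 1 [MOD m] := ((Nat.modEq_iff_dvd' hq1).mpr hdvd).symm
  have hSm := Stmt9Aux.sum_pow_modEq (q := q) m hq_mod_m m
  have hm_dvd_sum : m ∣ (∑ i ∈ Finset.range m, q ^ i) :=
    (Nat.modEq_zero_iff_dvd).mp (hSm.trans (Nat.modEq_zero_iff_dvd.mpr dvd_rfl))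
  obtain ⟨t, ht⟩ := hm_dvd_sum
  have hdvdD : m * (q-1) ∣ q ^ m - 1 := ⟨t, by rw [← hgeom, ht]; ring⟩
  have hNpos : 0 < q ^ m - 1 := by
    have h : 1 < q ^ m := Nat.one_lt_pow (by omega) (by omega)
    omega
  obtain ⟨g, hg⟩ := IsCyclic.exists_generator (α := Kˣ)
  have horder : orderOf g = q ^ m - 1 := by
    rw [orderOf_eq_card_of_forall_mem_zpowers hg, Nat.card_units, Nat.card_eq_fintype_card, hK]
  have hgprim : IsPrimitiveRoot g (q ^ m - 1) := horder ▸ IsPrimitiveRoot.orderOf g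
  have hzu : IsPrimitiveRoot (g ^ ((q ^ m - 1)/(m*(q-1)))) (m*(q-1)) :=
    hgprim.pow hNpos (Nat.div_mul_cancel hdvdD).symm
  have hz : IsPrimitiveRoot (((g ^ ((q ^ m - 1)/(m*(q-1))) : Kˣ)) : K) (m*(q-1)) :=
    IsPrimitiveRoot.coe_units_iff.mpr hzu
  have hWcard : (univ.filter fun x : K => x ^ (m*(q-1)) = 1).card = m * (q-1) := by
    have hW : (univ.filter fun x : K => x ^ (m*(q-1)) = 1) =
        Polynomial.nthRootsFinset (m*(q-1)) (1 : K) := by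
      ext x
      simp [Polynomial.mem_nthRootsFinset hD0]
    rw [hW, hz.card_nthRootsFinset]
  have hgcd : Nat.gcd ((q-1)*(q-1)) (q ^ m - 1) = m * (q-1) := by
    rw [← hgeom, Nat.gcd_mul_left]
    have h1 : (∑ i ∈ Finset.range m, q ^ i) % (q-1) = m % (q-1) :=
      Stmt9Aux.sum_pow_modEq (q := q) (q-1) ((Nat.modEq_iff_dvd' hq1).mpr dvd_rfl).symm m
    have h2 : Nat.gcd (q-1) (∑ i ∈ Finset.range m, q ^ i) = m := by
      rw [Nat.gcd_rec (q-1), h1, ← Nat.gcd_rec (q-1)]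
      exact Nat.gcd_eq_right hdvd
    rw [h2, mul_comm]
  -- characterize the special elements at the level of K
  have hmemA : ∀ x : K, (x ∉ Set.range (algebraMap F K) ∧ ∃ c : F, x ^ q = algebraMap F K c * x)
      ↔ (x ^ (m*(q-1)) = 1 ∧ x ∉ Set.range (algebraMap F K)) := by
    intro x
    constructor
    · rintro ⟨hxR, c, hc⟩
      refine ⟨?_, hxR⟩
      have hx0 : x ≠ 0 := fun h => hxR (h ▸ hzero_mem)
      have hc0 : c ≠ 0 := by
        intro h; subst h
        rw [map_zero, zero_mul] at hc
        exact hx0 (pow_eq_zero_iff (by omega : q ≠ 0) |>.mp hc)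
      have hxq1 : x ^ (q - 1) = algebraMap F K c := by
        apply mul_right_cancel₀ hx0
        rw [← pow_succ]
        have he : q - 1 + 1 = q := by omega
        rw [he, hc]
      have hx2 : x ^ ((q-1)*(q-1)) = 1 := by
        rw [pow_mul, hxq1, ← map_pow]
        have hcq : c ^ (q-1) = 1 := by
          have h := FiniteField.pow_card_sub_one_eq_one c hc0
          rwa [hF] at h
        rw [hcq, map_one]
      have hxN : x ^ (q ^ m - 1) = 1 := by
        have h := FiniteField.pow_card_sub_one_eq_one x hx0
        rwa [hK] at h
      have hord : orderOf x ∣ m * (q-1) := by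
        rw [← hgcd]
        exact Nat.dvd_gcd (orderOf_dvd_of_pow_eq_one hx2) (orderOf_dvd_of_pow_eq_one hxN)
      exact orderOf_dvd_iff_pow_eq_one.mp hord
    · rintro ⟨hx1, hxR⟩
      refine ⟨hxR, ?_⟩
      obtain ⟨u, hu⟩ := hdvd
      have hx2 : x ^ ((q-1)*(q-1)) = 1 := by
        have he : (q-1)*(q-1) = (m*(q-1)) * u := by rw [hu]; ring
        rw [he, pow_mul, hx1, one_pow]
      have hy : x ^ (q-1) ∈ Set.range (algebraMap F K) := by
        rw [Stmt9Aux.mem_range_iff hq2 hF, ← pow_mul]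
        have he : (q-1) * q = (q-1)*(q-1) + (q-1) := by
          have h' : q = (q - 1) + 1 := by omega
          calc (q-1) * q = (q-1) * ((q-1) + 1) := by rw [← h']
            _ = (q-1)*(q-1) + (q-1) := by ring
        rw [he, pow_add, hx2, one_mul]
      obtain ⟨c, hcy⟩ := hy
      refine ⟨c, ?_⟩
      have he : x ^ q = x ^ (q-1) * x := by
        rw [← pow_succ]
        congr 1
        omega
      rw [he, ← hcy]
  -- count the special elements in K
  have hAK : (univ.filter fun x : K => x ∉ Set.range (algebraMap F K) ∧
      ∃ c : F, x ^ q = algebraMap F K c * x).card = (m-1) * (q-1) := by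
    have hsetEq : (univ.filter fun x : K => x ∉ Set.range (algebraMap F K) ∧
        ∃ c : F, x ^ q = algebraMap F K c * x) =
        (univ.filter fun x : K => x ^ (m*(q-1)) = 1).filter
          (fun x => x ∉ Set.range (algebraMap F K)) := by
      ext x
      simp only [Finset.mem_filter, Finset.mem_univ, true_and]
      exact hmemA x
    have hWR : ((univ.filter fun x : K => x ^ (m*(q-1)) = 1).filter
        (fun x => x ∈ Set.range (algebraMap F K))).card = q - 1 := by
      have him : (univ.filter fun x : K => x ^ (m*(q-1)) = 1).filter
          (fun x => x ∈ Set.range (algebraMap F K)) =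
          Finset.image (fun k : Fˣ => algebraMap F K (k : F)) univ := by
        ext x
        simp only [Finset.mem_filter, Finset.mem_univ, true_and, Finset.mem_image]
        constructor
        · rintro ⟨hx1, y, rfl⟩
          have hy0 : y ≠ 0 := by
            rintro rfl
            rw [map_zero, zero_pow (by omega : m * (q-1) ≠ 0)] at hx1
            exact zero_ne_one hx1
          exact ⟨Units.mk0 y hy0, rfl⟩
        · rintro ⟨k, rfl⟩
          refine ⟨?_, ⟨(k:F), rfl⟩⟩
          have hk1 : (k:F) ^ (q-1) = 1 := by
            have h := FiniteField.pow_card_sub_one_eq_one (k:F) (Units.ne_zero k)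
            rwa [hF] at h
          rw [← map_pow, mul_comm m (q-1), pow_mul, hk1, one_pow, map_one]
      have hinj : Function.Injective (fun k : Fˣ => algebraMap F K (k : F)) := by
        intro k k' h
        exact Units.ext ((algebraMap F K).injective h)
      rw [him, Finset.card_image_of_injective _ hinj, Finset.card_univ,
        Fintype.card_units, hF]
    have hsplit := Finset.card_filter_add_card_filter_not
      (s := univ.filter fun x : K => x ^ (m*(q-1)) = 1)
      (fun x => x ∈ Set.range (algebraMap F K))
    rw [hsetEq]
    have hcc : ((univ.filter fun x : K => x ^ (m*(q-1)) = 1).filter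
        (fun x => x ∉ Set.range (algebraMap F K))).card = m * (q-1) - (q-1) := by
      omega
    rw [hcc, Nat.sub_one_mul]
  -- transfer to the subtype
  have hAS : (univ.filter fun a : S => P a).card = (m-1)*(q-1) := by
    rw [← hAK]
    apply Finset.card_bij (fun (a : S) _ => (a : K))
    · intro a ha
      simp only [Finset.mem_filter, Finset.mem_univ, true_and, hPdef] at ha ⊢
      exact ⟨a.2, ha⟩
    · intro a _ b _ h
      exact Subtype.ext h
    · intro x hx
      simp only [Finset.mem_filter, Finset.mem_univ, true_and] at hx
      refine ⟨⟨x, hx.1⟩, ?_, rfl⟩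
      simp only [Finset.mem_filter, Finset.mem_univ, true_and, hPdef]
      exact hx.2
  -- the quotient-level predicate
  set Pb : Quot r → Prop := fun cQ => ∃ a : S, Quot.mk r a = cQ ∧ P a with hPbdef
  have hfib : ∀ cQ : Quot r, (univ.filter fun b : S => Quot.mk r b = cQ).card
      = if Pb cQ then q - 1 else m * (q-1) := by
    intro cQ
    obtain ⟨a, rfl⟩ := Quot.exists_rep cQ
    have hfe : (univ.filter fun b : S => Quot.mk r b = Quot.mk r a)
        = (univ.filter fun b : S => r a b) := by
      ext b
      simp only [Finset.mem_filter, Finset.mem_univ, true_and]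
      rw [hQeq]
      exact ⟨fun h => hsymm _ _ h, fun h => hsymm _ _ h⟩
    have hPbiff : Pb (Quot.mk r a) ↔ P a := by
      simp only [hPbdef]
      constructor
      · rintro ⟨a', ha', hP⟩
        exact hPinv _ _ ((hQeq a' a).mp ha') hP
      · intro h; exact ⟨a, rfl, h⟩
    by_cases hp : P a
    · rw [if_pos (hPbiff.mpr hp), hfe, key1 a hp]
    · rw [if_neg (fun hh => hp (hPbiff.mp hh)), hfe, key2 a hp]
  have htot : Fintype.card S = ∑ cQ : Quot r,
      (univ.filter fun b : S => Quot.mk r b = cQ).card := by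
    rw [← Finset.card_univ]
    exact Finset.card_eq_sum_card_fiberwise (fun a _ => Finset.mem_univ _)
  have hQsplit := Finset.card_filter_add_card_filter_not
    (s := (univ : Finset (Quot r))) Pb
  have hAQ : (univ.filter fun a : S => P a).card
      = ∑ cQ ∈ univ.filter Pb,
          ((univ.filter fun a : S => P a).filter fun b => Quot.mk r b = cQ).card :=
    Finset.card_eq_sum_card_fiberwise (by
      intro a ha
      simp only [Finset.coe_filter, Set.mem_setOf_eq, Finset.mem_coe, Finset.mem_filter, Finset.mem_univ, true_and] at ha ⊢
      simp only [hPbdef]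
      exact ⟨a, rfl, ha⟩)
  have hAQ2 : ∀ cQ ∈ univ.filter Pb,
      ((univ.filter fun a : S => P a).filter fun b => Quot.mk r b = cQ).card = q - 1 := by
    intro cQ hcQ
    simp only [Finset.mem_filter, Finset.mem_univ, true_and, hPbdef] at hcQ
    obtain ⟨a, rfl, hPa⟩ := hcQ
    have hff : ((univ.filter fun a : S => P a).filter fun b => Quot.mk r b = Quot.mk r a)
        = (univ.filter fun b : S => Quot.mk r b = Quot.mk r a) := by
      ext b
      simp only [Finset.mem_filter, Finset.mem_univ, true_and]
      constructor
      · rintro ⟨-, h⟩; exact h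
      · intro h
        exact ⟨hPinv _ _ (hsymm _ _ ((hQeq b a).mp h)) hPa, h⟩
    rw [hff, hfib, if_pos (by simp only [hPbdef]; exact ⟨a, rfl, hPa⟩)]
  have hQs : (univ.filter Pb).card = m - 1 := by
    have h1 : (univ.filter fun a : S => P a).card = (univ.filter Pb).card * (q-1) := by
      rw [hAQ, Finset.sum_congr rfl hAQ2, Finset.sum_const, smul_eq_mul]
    rw [hAS] at h1
    exact (Nat.eq_of_mul_eq_mul_right (by omega : 0 < q - 1) h1.symm)
  have hQc : q ^ m - q = (m-1) * (q-1) +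
      (univ.filter fun cQ => ¬ Pb cQ).card * (m * (q-1)) := by
    rw [← hcardS, htot, ← Finset.sum_filter_add_sum_filter_not univ Pb]
    congr 1
    · rw [Finset.sum_congr rfl (fun cQ h => by
        rw [hfib, if_pos (Finset.mem_filter.mp h).2]),
        Finset.sum_const, smul_eq_mul, hQs]
    · rw [Finset.sum_congr rfl (fun cQ h => by
        rw [hfib, if_neg (Finset.mem_filter.mp h).2]),
        Finset.sum_const, smul_eq_mul]
  rw [Nat.card_eq_fintype_card, ← Finset.card_univ, ← hQsplit, hQs]
  congr 1
  have hnum : q ^ m - q - (q-1)*(m-1) =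
      (univ.filter fun cQ => ¬ Pb cQ).card * (m * (q-1)) := by
    rw [mul_comm (q-1) (m-1), hQc, Nat.add_sub_cancel_left]
  rw [hnum, Nat.mul_div_cancel _ hD0]
end

section
/- Let K = F_{q^m} ⊇ F = F_q with σ the q-power Frobenius, m prime dividing q - 1, and write K = F(d) with d^m = c ∈ F^×. If a ∈ K \ F satisfies σ^i(a) = k·a for some 1 ≤ i ≤ m-1 and k ∈ F^×, then a = λ·d^j for some λ ∈ F^× and 1 ≤ j ≤ m-1. -/
lemma aux_gcd_dvd (q i m : ℕ) (hq : 2 ≤ q) (hco : Nat.gcd i m = 1) :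
    Nat.gcd (q ^ i - 1) (q ^ m - 1) ∣ q - 1 := by
  set g := Nat.gcd (q ^ i - 1) (q ^ m - 1) with hg
  have hqi : 1 ≤ q ^ i := Nat.one_le_pow _ _ (by omega)
  have hqm : 1 ≤ q ^ m := Nat.one_le_pow _ _ (by omega)
  have key : ∀ n : ℕ, 1 ≤ q ^ n → g ∣ q ^ n - 1 → ((q : ZMod g)) ^ n = 1 := by
    intro n h1 h2
    have h3 : ((q ^ n - 1 : ℕ) : ZMod g) = 0 := (ZMod.natCast_eq_zero_iff _ _).mpr h2
    rw [Nat.cast_sub h1] at h3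
    push_cast at h3
    rw [sub_eq_zero] at h3
    exact h3
  have h1 : ((q : ZMod g)) ^ i = 1 := key i hqi (Nat.gcd_dvd_left _ _)
  have h2 : ((q : ZMod g)) ^ m = 1 := key m hqm (Nat.gcd_dvd_right _ _)
  have ho1 : orderOf ((q : ZMod g)) ∣ i := orderOf_dvd_of_pow_eq_one h1
  have ho2 : orderOf ((q : ZMod g)) ∣ m := orderOf_dvd_of_pow_eq_one h2
  have ho : orderOf ((q : ZMod g)) = 1 := Nat.dvd_one.mp (hco ▸ Nat.dvd_gcd ho1 ho2)
  have hq1 : (q : ZMod g) = 1 := orderOf_eq_one_iff.mp ho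
  have : ((q - 1 : ℕ) : ZMod g) = 0 := by
    rw [Nat.cast_sub (by omega)]
    push_cast
    rw [hq1, sub_self]
  exact (ZMod.natCast_eq_zero_iff _ _).mp this

/-- Let K = F_{q^m} = F(d), d a root of irreducible t^m - c ∈ F[t], m prime
dividing q - 1, σ the Frobenius x ↦ x^q.  If a ∈ K \ F satisfies
σ^i(a) = k·a for some 1 ≤ i ≤ m-1 and k ∈ F^×, then a = λ·d^j for some
λ ∈ F^× and 1 ≤ j ≤ m-1. -/
theorem stmt_10 (q m : ℕ) (hq : IsPrimePow q) (hm : m.Prime)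
    (hdvd : m ∣ (q - 1))
    (F K : Type) [Field F] [Field K] [Fintype F] [Fintype K] [Algebra F K]
    (hF : Fintype.card F = q) (hK : Fintype.card K = q ^ m)
    (d : K) (c : F) (hc : c ≠ 0) (hd : d ^ m = algebraMap F K c)
    (hirr : Irreducible (Polynomial.X ^ m - Polynomial.C c))
    (hadj : Algebra.adjoin F ({d} : Set K) = ⊤)
    (a : K) (ha : a ∉ Set.range (algebraMap F K))
    (i : ℕ) (hi1 : 1 ≤ i) (hi2 : i ≤ m - 1)
    (k : F) (hk : k ≠ 0) (hka : a ^ (q ^ i) = algebraMap F K k * a) :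
    ∃ (lam : F) (j : ℕ), lam ≠ 0 ∧ 1 ≤ j ∧ j ≤ m - 1 ∧
      a = algebraMap F K lam * d ^ j := by
  classical
  haveI fm : Fact m.Prime := ⟨hm⟩
  haveI : NeZero m := ⟨hm.ne_zero⟩
  have hq2 : 2 ≤ q := hq.two_le
  have hm2 : 2 ≤ m := hm.two_le
  have hmi : ¬ m ∣ i := by
    intro h
    have := Nat.le_of_dvd (by omega) h
    omega
  have hco : Nat.gcd i m = 1 := Nat.coprime_comm.mp (hm.coprime_iff_not_dvd.mpr hmi)
  have hFq : ∀ y : F, y ^ q = y := fun y => by rw [← hF]; exact FiniteField.pow_card y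
  have hmapq : ∀ y : F, (algebraMap F K y) ^ q = algebraMap F K y := by
    intro y; rw [← map_pow, hFq]
  have hmap_pow : ∀ (y : F) (n : ℕ), (algebraMap F K y) ^ q ^ n = algebraMap F K y := by
    intro y n
    rw [← map_pow]
    congr 1
    rw [← hF]
    exact FiniteField.pow_card_pow n y
  have hKm : ∀ (x : K) (n : ℕ), x ^ (q ^ m) ^ n = x := by
    intro x n
    rw [← hK]
    exact FiniteField.pow_card_pow n x
  have ha0 : a ≠ 0 := by
    intro h
    exact ha ⟨0, by simp [h]⟩
  -- Lemma B : fixed points of x ↦ x ^ q are in the image of F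
  have memB : ∀ x : K, x ^ q = x → x ∈ Set.range (algebraMap F K) := by
    intro x hx
    by_contra hxr
    set f : Polynomial K := Polynomial.X ^ q - Polynomial.X with hfdef
    have hdeg : f.natDegree = q := by
      rw [hfdef]
      rw [Polynomial.natDegree_sub_eq_left_of_natDegree_lt]
      · exact Polynomial.natDegree_X_pow q
      · rw [Polynomial.natDegree_X_pow, Polynomial.natDegree_X]; omega
    have hf0 : f ≠ 0 := by
      intro h
      rw [h, Polynomial.natDegree_zero] at hdeg
      omega
    set S : Finset K := Finset.univ.image (algebraMap F K) with hS
    have hcardS : S.card = q := by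
      rw [hS, Finset.card_image_of_injective _ (algebraMap F K).injective,
        Finset.card_univ, hF]
    have hxS : x ∉ S := by
      intro h
      rcases Finset.mem_image.mp h with ⟨z, _, rfl⟩
      exact hxr ⟨z, rfl⟩
    have hsub : insert x S ⊆ f.roots.toFinset := by
      intro y hy
      rw [Multiset.mem_toFinset, Polynomial.mem_roots hf0]
      rcases Finset.mem_insert.mp hy with rfl | hyS
      · simp [hfdef, Polynomial.IsRoot, hx]
      · rcases Finset.mem_image.mp hyS with ⟨z, _, rfl⟩
        simp [hfdef, Polynomial.IsRoot, ← map_pow, hFq]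
    have h1 : (insert x S).card = q + 1 := by
      rw [Finset.card_insert_of_notMem hxS, hcardS]
    have h2 : f.roots.toFinset.card ≤ q :=
      le_trans (Multiset.toFinset_card_le _) (le_trans (Polynomial.card_roots' f) (le_of_eq hdeg))
    have h3 := Finset.card_le_card hsub
    omega
  -- Lemma A : fixed points of x ↦ x ^ (q ^ i) are in the image of F
  have memA : ∀ x : K, x ^ q ^ i = x → x ∈ Set.range (algebraMap F K) := by
    intro x hx
    rcases eq_or_ne x 0 with rfl | hx0
    · exact ⟨0, by simp⟩
    have hqi : 1 ≤ q ^ i := Nat.one_le_pow _ _ (by omega)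
    have hqm : 1 ≤ q ^ m := Nat.one_le_pow _ _ (by omega)
    have e1 : x ^ (q ^ i - 1) = 1 := by
      have h4 : x ^ (q ^ i - 1) * x = 1 * x := by
        rw [← pow_succ, Nat.sub_add_cancel hqi, hx, one_mul]
      exact mul_right_cancel₀ hx0 h4
    have e2 : x ^ (q ^ m - 1) = 1 := by
      have h4 : x ^ (q ^ m - 1) * x = 1 * x := by
        rw [← pow_succ, Nat.sub_add_cancel hqm, one_mul]
        have := hKm x 1
        rwa [pow_one] at this
      exact mul_right_cancel₀ hx0 h4
    have hdvd2 : orderOf x ∣ q - 1 :=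
      dvd_trans (Nat.dvd_gcd (orderOf_dvd_of_pow_eq_one e1) (orderOf_dvd_of_pow_eq_one e2))
        (aux_gcd_dvd q i m hq2 hco)
    have e3 : x ^ (q - 1) = 1 := orderOf_dvd_iff_pow_eq_one.mp hdvd2
    apply memB
    calc x ^ q = x ^ (q - 1) * x := by rw [← pow_succ, Nat.sub_add_cancel (by omega)]
      _ = x := by rw [e3, one_mul]
  -- basic facts about d and ζ
  have hd0 : d ≠ 0 := by
    intro h
    apply hc
    have h2 := hd
    rw [h, zero_pow (by omega : m ≠ 0)] at h2
    exact ((map_eq_zero _).mp h2.symm)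
  set e := (q - 1) / m with he
  have hem : m * e = q - 1 := Nat.mul_div_cancel' hdvd
  set ζ := c ^ e with hζ
  have hζ0 : ζ ≠ 0 := pow_ne_zero _ hc
  have hc1 : c ^ (q - 1) = 1 := by
    rw [← hF]
    exact FiniteField.pow_card_sub_one_eq_one c hc
  have hzm : ζ ^ m = 1 := by
    rw [hζ, ← pow_mul, mul_comm e m, hem, hc1]
  have hdq1 : d ^ (q - 1) = algebraMap F K ζ := by
    calc d ^ (q - 1) = (d ^ m) ^ e := by rw [← pow_mul, hem]
      _ = algebraMap F K ζ := by rw [hd, ← map_pow]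
  have hdq : d ^ q = algebraMap F K ζ * d := by
    calc d ^ q = d ^ (q - 1) * d := by rw [← pow_succ, Nat.sub_add_cancel (by omega)]
      _ = algebraMap F K ζ * d := by rw [hdq1]
  have hz1 : ζ ≠ 1 := by
    intro h
    have hdfix : d ^ q = d := by rw [hdq, h, map_one, one_mul]
    have hdmem := memB d hdfix
    apply ha
    have hle : Algebra.adjoin F ({d} : Set K) ≤ ⊥ := by
      apply Algebra.adjoin_le
      intro y hy
      rw [Set.mem_singleton_iff] at hy
      subst hy
      rwa [SetLike.mem_coe, Algebra.mem_bot]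
    have htop : (⊤ : Subalgebra F K) ≤ ⊥ := hadj ▸ hle
    have hmem := htop (Algebra.mem_top : a ∈ (⊤ : Subalgebra F K))
    rwa [Algebra.mem_bot] at hmem
  have horder : orderOf ζ = m := orderOf_eq_prime hzm hz1
  have hprim : IsPrimitiveRoot ζ m :=
    ⟨hzm, fun l hl => horder ▸ orderOf_dvd_of_pow_eq_one hl⟩
  -- k ^ m = 1
  have hstep : ∀ s : ℕ, a ^ (q ^ i) ^ s = (algebraMap F K k) ^ s * a := by
    intro s
    induction s with
    | zero => simp
    | succ s ih =>
      calc a ^ (q ^ i) ^ (s + 1) = (a ^ (q ^ i) ^ s) ^ (q ^ i) := by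
            rw [pow_succ, pow_mul]
        _ = ((algebraMap F K k) ^ s * a) ^ (q ^ i) := by rw [ih]
        _ = ((algebraMap F K k) ^ (q ^ i)) ^ s * a ^ (q ^ i) := by
            rw [mul_pow, ← pow_mul, mul_comm s (q ^ i), pow_mul]
        _ = (algebraMap F K k) ^ s * ((algebraMap F K k) * a) := by
            rw [hmap_pow k i, hka]
        _ = (algebraMap F K k) ^ (s + 1) * a := by ring
  have hkm : k ^ m = 1 := by
    have h1 : a ^ (q ^ i) ^ m = a := by
      rw [← pow_mul, mul_comm i m, pow_mul]
      exact hKm a i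
    have h2 := hstep m
    rw [h1] at h2
    have h3 : (algebraMap F K k) ^ m = 1 := by
      have h4 : (algebraMap F K k) ^ m * a = 1 * a := by rw [← h2, one_mul]
      exact mul_right_cancel₀ ha0 h4
    have h5 : algebraMap F K (k ^ m) = algebraMap F K 1 := by
      rw [map_pow, h3, map_one]
    exact (algebraMap F K).injective h5
  obtain ⟨t, htm, hzt⟩ := hprim.eq_pow_of_pow_eq_one hkm
  have ht0 : t ≠ 0 := by
    rintro rfl
    rw [pow_zero] at hzt
    apply ha
    apply memA
    rw [hka, ← hzt, map_one, one_mul]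
  -- choose j
  set u : ZMod m := (t : ZMod m) * (i : ZMod m)⁻¹ with hu
  set j := u.val with hj
  have hiz : (i : ZMod m) ≠ 0 := by
    rw [Ne, ZMod.natCast_eq_zero_iff]
    exact hmi
  have htz : (t : ZMod m) ≠ 0 := by
    rw [Ne, ZMod.natCast_eq_zero_iff]
    intro h
    exact ht0 (Nat.eq_zero_of_dvd_of_lt h htm)
  have huz : u ≠ 0 := mul_ne_zero htz (inv_ne_zero hiz)
  have hjlt : j < m := ZMod.val_lt u
  have hj1 : 1 ≤ j := by
    rcases Nat.eq_zero_or_pos j with h | h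
    · exact absurd ((ZMod.val_eq_zero u).mp h) huz
    · exact h
  have hij : ((i * j : ℕ) : ZMod m) = (t : ZMod m) := by
    push_cast
    rw [hj, ZMod.natCast_zmod_val, hu]
    field_simp
  have hzp : ∀ n : ℕ, ζ ^ n = ζ ^ (n % m) := by
    intro n
    conv_lhs => rw [← Nat.div_add_mod n m]
    rw [pow_add, pow_mul, hzm, one_pow, one_mul]
  have hmod : (i * j) % m = t % m := (ZMod.natCast_eq_natCast_iff _ _ _).mp hij
  have hzij : ζ ^ (i * j) = ζ ^ t := by
    rw [hzp (i * j), hzp t, hmod]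
  -- d ^ (q ^ n) = ζ ^ n * d
  have hdqn : ∀ n : ℕ, d ^ q ^ n = (algebraMap F K ζ) ^ n * d := by
    intro n
    induction n with
    | zero => simp
    | succ n ih =>
      calc d ^ q ^ (n + 1) = (d ^ q ^ n) ^ q := by rw [← pow_mul, pow_succ]
        _ = ((algebraMap F K ζ) ^ n * d) ^ q := by rw [ih]
        _ = ((algebraMap F K ζ) ^ q) ^ n * d ^ q := by
            rw [mul_pow, ← pow_mul, mul_comm n q, pow_mul]
        _ = (algebraMap F K ζ) ^ (n + 1) * d := by rw [hmapq, hdq]; ring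
  -- the element b = a / d^j is fixed by x ↦ x ^ (q ^ i)
  have hdj : d ^ j ≠ 0 := pow_ne_zero _ hd0
  have hzijne : algebraMap F K (ζ ^ (i * j)) ≠ 0 := by
    rw [Ne, map_eq_zero]
    exact pow_ne_zero _ hζ0
  have hk2 : algebraMap F K k = algebraMap F K (ζ ^ (i * j)) := by
    rw [hzij, hzt]
  have h5 : (d ^ j) ^ q ^ i = algebraMap F K (ζ ^ (i * j)) * d ^ j := by
    calc (d ^ j) ^ q ^ i = (d ^ q ^ i) ^ j := by rw [← pow_mul, mul_comm, pow_mul]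
      _ = ((algebraMap F K ζ) ^ i * d) ^ j := by rw [hdqn i]
      _ = (algebraMap F K ζ) ^ (i * j) * d ^ j := by rw [mul_pow, ← pow_mul]
      _ = algebraMap F K (ζ ^ (i * j)) * d ^ j := by rw [← map_pow]
  set b := a * (d ^ j)⁻¹ with hb
  have hbq : b ^ q ^ i = b := by
    rw [hb, mul_pow, hka, inv_pow, h5, hk2, mul_inv]
    calc algebraMap F K (ζ ^ (i * j)) * a *
          ((algebraMap F K (ζ ^ (i * j)))⁻¹ * (d ^ j)⁻¹)
        = (algebraMap F K (ζ ^ (i * j)) * (algebraMap F K (ζ ^ (i * j)))⁻¹) *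
          (a * (d ^ j)⁻¹) := by ring
      _ = a * (d ^ j)⁻¹ := by rw [mul_inv_cancel₀ hzijne, one_mul]
  obtain ⟨lam, hlam⟩ := memA b hbq
  have hb0 : b ≠ 0 := mul_ne_zero ha0 (inv_ne_zero hdj)
  have hlam0 : lam ≠ 0 := by
    intro h
    rw [h, map_zero] at hlam
    exact hb0 hlam.symm
  refine ⟨lam, j, hlam0, hj1, by omega, ?_⟩
  rw [hlam, hb, inv_mul_cancel_right₀ hdj]
end
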